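/- Let K ≥ 1 and SF_p ≥ 1 be integers and let d[0],…,d[SF_p−1] ∈ {−1,+1} be a spreading sequence. If Σ_{l=0}^{SF_p−1} (−1)^l · d[l] = 0, then Σ_{l=0}^{SF_p−1} Σ_{n=0}^{K−1} s₁^{(l)}[n] · conj(s₀^{(l)}[n]) = 0; in particular the correlation coefficient ρ_DM(d) = (1/(K·SF_p)) · |Σ_{l<SF_p} Σ_{n<K} s₁^{(l)}[n] · conj(s₀^{(l)}[n])| equals zero, i.e. the DSSS-MSK symbols '1' and '0' spread by d are orthogonal. -/

import Mathlib

open Real Complex Finset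

noncomputable def dsssMskChip (d : ℕ → ℝ) (K l n : ℕ) : ℂ :=
  Complex.exp (Complex.I * (Real.pi / 2) * (∑ i ∈ Finset.range l, (d i : ℂ))) *
    Complex.exp (Complex.I * Real.pi * (d l : ℂ) * (n : ℂ) / (2 * (K : ℂ)))

lemma chip_prod (d : ℕ → ℝ) (K l n : ℕ) (hK0 : (K : ℂ) ≠ 0) :
    dsssMskChip d K l n * (starRingEnd ℂ) (dsssMskChip (fun i => -d i) K l n)
      = Complex.exp (Complex.I * Real.pi * (∑ i ∈ Finset.range l, (d i : ℂ))) *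
        Complex.exp (Complex.I * Real.pi * (d l : ℂ) * (n : ℂ) / (K : ℂ)) := by
  unfold dsssMskChip
  rw [map_mul, ← Complex.exp_conj, ← Complex.exp_conj, ← Complex.exp_add, ← Complex.exp_add,
    ← Complex.exp_add, ← Complex.exp_add]
  congr 1
  simp only [map_mul, map_div₀, map_sum, map_neg, Complex.conj_I, Complex.conj_ofReal,
    Complex.conj_natCast, map_ofNat, Complex.ofReal_neg, Finset.sum_neg_distrib]
  field_simp
  ring

lemma exp_prefix (d : ℕ → ℝ) (l : ℕ) (hd : ∀ i < l, d i = 1 ∨ d i = -1) :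
    Complex.exp (Complex.I * Real.pi * (∑ i ∈ Finset.range l, (d i : ℂ))) = (-1 : ℂ) ^ l := by
  induction l with
  | zero => simp
  | succ m ih =>
    rw [Finset.sum_range_succ, mul_add, Complex.exp_add,
      ih (fun i hi => hd i (Nat.lt_succ_of_lt hi)), pow_succ]
    congr 1
    rcases hd m (Nat.lt_succ_self m) with h | h
    · rw [h, show Complex.I * (Real.pi : ℂ) * ((1 : ℝ) : ℂ) = (Real.pi : ℂ) * Complex.I by
        push_cast; ring, Complex.exp_pi_mul_I]
    · rw [h, show Complex.I * (Real.pi : ℂ) * ((-1 : ℝ) : ℂ) = -((Real.pi : ℂ) * Complex.I) by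
        push_cast; ring, Complex.exp_neg, Complex.exp_pi_mul_I]
      norm_num

lemma exp_chip (d : ℝ) (K n : ℕ) (hd : d = 1 ∨ d = -1) :
    Complex.exp (Complex.I * Real.pi * (d : ℂ) * (n : ℂ) / (K : ℂ))
      = (Real.cos (Real.pi * n / K) : ℂ) + Complex.I * (d : ℂ) * (Real.sin (Real.pi * n / K) : ℂ) := by
  rcases hd with h | h <;> subst h
  · have : Complex.I * (Real.pi : ℂ) * (1 : ℝ) * (n : ℂ) / (K : ℂ)
        = ((Real.pi * n / K : ℝ) : ℂ) * Complex.I := by push_cast; ring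
    rw [this, Complex.exp_mul_I, ← Complex.ofReal_cos, ← Complex.ofReal_sin]
    push_cast
    ring
  · have : Complex.I * (Real.pi : ℂ) * ((-1 : ℝ) : ℂ) * (n : ℂ) / (K : ℂ)
        = ((-(Real.pi * n / K) : ℝ) : ℂ) * Complex.I := by push_cast; ring
    rw [this, Complex.exp_mul_I, ← Complex.ofReal_cos, ← Complex.ofReal_sin,
      Real.cos_neg, Real.sin_neg]
    push_cast
    ring

lemma even_of_sum (SFp : ℕ) (d : ℕ → ℝ) (hd : ∀ l < SFp, d l = 1 ∨ d l = -1)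
    (horth : ∑ l ∈ Finset.range SFp, (-1 : ℝ) ^ l * d l = 0) : Even SFp := by
  classical
  set A := (Finset.range SFp).filter (fun l => (-1 : ℝ) ^ l * d l = 1) with hA
  set B := (Finset.range SFp).filter (fun l => ¬ (-1 : ℝ) ^ l * d l = 1) with hB
  have hval : ∀ l ∈ Finset.range SFp, (-1 : ℝ) ^ l * d l = 1 ∨ (-1 : ℝ) ^ l * d l = -1 := by
    intro l hl
    rcases Nat.even_or_odd l with he | ho
    · rcases hd l (Finset.mem_range.mp hl) with h | h <;> simp [he.neg_one_pow, h]
    · rcases hd l (Finset.mem_range.mp hl) with h | h <;> simp [ho.neg_one_pow, h]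
  have hA1 : ∑ l ∈ A, ((-1 : ℝ) ^ l * d l) = (A.card : ℝ) := by
    rw [Finset.sum_congr rfl (fun l hl => (Finset.mem_filter.mp hl).2)]
    simp
    rfl
  have hB1 : ∑ l ∈ B, ((-1 : ℝ) ^ l * d l) = -(B.card : ℝ) := by
    have hv : ∀ l ∈ B, (-1 : ℝ) ^ l * d l = -1 := by
      intro l hl
      rcases hval l (Finset.mem_filter.mp hl).1 with h | h
      · exact absurd h (Finset.mem_filter.mp hl).2
      · exact h
    rw [Finset.sum_congr rfl hv]
    simp
  have hsplit : (A.card : ℝ) - (B.card : ℝ) = 0 := by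
    rw [← horth, ← Finset.sum_filter_add_sum_filter_not (Finset.range SFp)
      (fun l => (-1 : ℝ) ^ l * d l = 1), ← hA, ← hB, hA1, hB1]
    ring
  have hc : A.card = B.card := by
    have := sub_eq_zero.mp hsplit
    exact_mod_cast this
  have hcards : A.card + B.card = SFp := by
    rw [hA, hB, Finset.card_filter_add_card_filter_not, Finset.card_range]
  exact ⟨A.card, by omega⟩

theorem prop2_orthogonal_spreading (K SFp : ℕ) (hK : 1 ≤ K) (hSFp : 1 ≤ SFp)
    (d : ℕ → ℝ) (hd : ∀ l < SFp, d l = 1 ∨ d l = -1)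
    (horth : ∑ l ∈ Finset.range SFp, (-1 : ℝ) ^ l * d l = 0) :
    (∑ l ∈ Finset.range SFp, ∑ n ∈ Finset.range K,
        dsssMskChip d K l n * (starRingEnd ℂ) (dsssMskChip (fun i => -d i) K l n)) = 0 ∧
    (1 / ((K : ℝ) * (SFp : ℝ))) *
      ‖∑ l ∈ Finset.range SFp, ∑ n ∈ Finset.range K,
        dsssMskChip d K l n * (starRingEnd ℂ) (dsssMskChip (fun i => -d i) K l n)‖ = 0 := by
  have hK0 : (K : ℂ) ≠ 0 := Nat.cast_ne_zero.mpr (by omega)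
  have heven : Even SFp := even_of_sum SFp d hd horth
  have h1 : (∑ l ∈ Finset.range SFp, (-1 : ℂ) ^ l) = 0 := by
    rw [neg_one_geom_sum, if_pos heven]
  have h2 : (∑ l ∈ Finset.range SFp, (-1 : ℂ) ^ l * (d l : ℂ)) = 0 := by
    have := congrArg (fun x : ℝ => (x : ℂ)) horth
    push_cast at this
    exact this
  have hmain : (∑ l ∈ Finset.range SFp, ∑ n ∈ Finset.range K,
      dsssMskChip d K l n * (starRingEnd ℂ) (dsssMskChip (fun i => -d i) K l n)) = 0 := by
    have hrw : ∀ l ∈ Finset.range SFp, ∀ n ∈ Finset.range K,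
        dsssMskChip d K l n * (starRingEnd ℂ) (dsssMskChip (fun i => -d i) K l n)
          = (-1 : ℂ) ^ l * ((Real.cos (Real.pi * n / K) : ℂ)
            + Complex.I * (d l : ℂ) * (Real.sin (Real.pi * n / K) : ℂ)) := by
      intro l hl n hn
      rw [chip_prod d K l n hK0,
        exp_prefix d l (fun i hi => hd i (lt_of_lt_of_le hi (Nat.le_of_lt_succ
          (Nat.lt_succ_of_lt (Finset.mem_range.mp hl))))),
        exp_chip (d l) K n (hd l (Finset.mem_range.mp hl))]
    calc (∑ l ∈ Finset.range SFp, ∑ n ∈ Finset.range K,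
        dsssMskChip d K l n * (starRingEnd ℂ) (dsssMskChip (fun i => -d i) K l n))
        = ∑ l ∈ Finset.range SFp, ∑ n ∈ Finset.range K,
            (-1 : ℂ) ^ l * ((Real.cos (Real.pi * n / K) : ℂ)
              + Complex.I * (d l : ℂ) * (Real.sin (Real.pi * n / K) : ℂ)) :=
          Finset.sum_congr rfl (fun l hl => Finset.sum_congr rfl (hrw l hl))
      _ = ∑ n ∈ Finset.range K, ∑ l ∈ Finset.range SFp,
            (-1 : ℂ) ^ l * ((Real.cos (Real.pi * n / K) : ℂ)
              + Complex.I * (d l : ℂ) * (Real.sin (Real.pi * n / K) : ℂ)) := Finset.sum_comm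
      _ = ∑ n ∈ Finset.range K, ((∑ l ∈ Finset.range SFp, (-1 : ℂ) ^ l)
            * (Real.cos (Real.pi * n / K) : ℂ)
            + Complex.I * (Real.sin (Real.pi * n / K) : ℂ)
            * (∑ l ∈ Finset.range SFp, (-1 : ℂ) ^ l * (d l : ℂ))) := by
          refine Finset.sum_congr rfl (fun n hn => ?_)
          rw [Finset.sum_mul, Finset.mul_sum, ← Finset.sum_add_distrib]
          exact Finset.sum_congr rfl (fun l hl => by ring)
      _ = 0 := by
          rw [h1, h2]
          simp
  exact ⟨hmain, by rw [hmain]; simp⟩
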